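/- Let (Ω, F, P) be a probability space and for each n = 1,...,N let A^(n) : Ω → ℝ^{I_n × R} be a random matrix with rows a^(n)_{i_n} : Ω → ℝ^R, where the collection of all row vectors is mutually independent and every entry is square-integrable. Let O be a deterministic N-th order tensor of size I_1 × ··· × I_N with entries in {0,1}. Then E[‖O ⊛ [[A^(1),...,A^(N)]]‖_F²] = Σ_{i_1,...,i_N} O_{i_1...i_N} ⟨E[a^(1)_{i_1} a^(1)T_{i_1}], ..., E[a^(N)_{i_N} a^(N)T_{i_N}]⟩, where ⟨·,...,·⟩ is the generalized inner product of R × R matrices. -/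

import Mathlib

open scoped BigOperators Matrix
open Finset Matrix MeasureTheory ProbabilityTheory

/-- Outer product of `N` vectors, as a tensor indexed by multi-indices. -/
def outerProd {ι : Type*} [Fintype ι] {I : ι → ℕ}
    (u : (n : ι) → Fin (I n) → ℝ) : ((n : ι) → Fin (I n)) → ℝ :=
  fun i => ∏ n, u n (i n)

/-- Kruskal operator: the tensor `[[A⁽¹⁾, …, A⁽ᴺ⁾]] = ∑ᵣ a⁽¹⁾₊ᵣ ∘ ⋯ ∘ a⁽ᴺ⁾₊ᵣ`. -/
def kruskal {ι : Type*} [Fintype ι] {I : ι → ℕ} {R : ℕ}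
    (A : (n : ι) → Matrix (Fin (I n)) (Fin R) ℝ) : ((n : ι) → Fin (I n)) → ℝ :=
  ∑ r : Fin R, outerProd (fun n iₙ => A n iₙ r)

/-- Integral of a finite product of independent integrable functions factorizes. -/
lemma iIndep_integral_prod {ι : Type*} {Ω : Type*} [MeasurableSpace Ω]
    {μ : Measure Ω} [IsProbabilityMeasure μ]
    {f : ι → Ω → ℝ}
    (hindep : iIndepFun f μ)
    (hmeas : ∀ i, Measurable (f i)) (hint : ∀ i, Integrable (f i) μ)
    (s : Finset ι) :
    Integrable (fun ω => ∏ i ∈ s, f i ω) μ ∧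
      (∫ ω, ∏ i ∈ s, f i ω ∂μ) = ∏ i ∈ s, ∫ ω, f i ω ∂μ := by
  classical
  induction s using Finset.cons_induction with
  | empty => simp [integrable_const]
  | cons a s ha ih =>
    have hIndep : IndepFun (∏ j ∈ s, f j) (f a) μ :=
      hindep.indepFun_finsetProd_of_notMem hmeas ha
    have hprodeq : (fun ω => ∏ i ∈ s, f i ω) = ∏ j ∈ s, f j := by
      funext ω; simp
    have hint_prod : Integrable (∏ j ∈ s, f j) μ := by
      rw [← hprodeq]; exact ih.1
    have hmul : Integrable ((∏ j ∈ s, f j) * f a) μ :=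
      hIndep.integrable_mul hint_prod (hint a)
    have heq : (fun ω => ∏ i ∈ Finset.cons a s ha, f i ω)
        = (∏ j ∈ s, f j) * f a := by
      funext ω
      simp only [Finset.prod_cons, Pi.mul_apply, Finset.prod_apply]
      ring
    constructor
    · rw [heq]; exact hmul
    · calc (∫ ω, ∏ i ∈ Finset.cons a s ha, f i ω ∂μ)
          = ∫ ω, ((∏ j ∈ s, f j) * f a) ω ∂μ := by rw [heq]
        _ = (∫ ω, (∏ j ∈ s, f j) ω ∂μ) * ∫ ω, f a ω ∂μ :=
            hIndep.integral_mul_eq_mul_integral hint_prod.aestronglyMeasurable (hint a).aestronglyMeasurable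
        _ = ∏ i ∈ Finset.cons a s ha, ∫ ω, f i ω ∂μ := by
            rw [Finset.prod_cons, mul_comm]
            congr 1
            · rw [← hprodeq, ih.2]

theorem stmt12 {N R : ℕ} {I : Fin N → ℕ}
    {Ω : Type*} [MeasurableSpace Ω] (P : Measure Ω) [IsProbabilityMeasure P]
    (A : (n : Fin N) → Ω → Matrix (Fin (I n)) (Fin R) ℝ)
    (hmeas : ∀ n (i : Fin (I n)), Measurable (fun ω => A n ω i))
    (hindep : iIndepFun
      (fun p : Σ n : Fin N, Fin (I n) => fun ω => A p.1 ω p.2) P)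
    (hL2 : ∀ n (i : Fin (I n)) (r : Fin R), MemLp (fun ω => A n ω i r) 2 P)
    (O : ((n : Fin N) → Fin (I n)) → ℝ)
    (hO : ∀ i, O i = 0 ∨ O i = 1) :
    (∫ ω, ∑ i : (n : Fin N) → Fin (I n),
        (O i * kruskal (fun n => A n ω) i) ^ 2 ∂P)
      = ∑ i : (n : Fin N) → Fin (I n),
          O i * ∑ r : Fin R, ∑ s : Fin R,
            ∏ n, ∫ ω, A n ω (i n) r * A n ω (i n) s ∂P := by
  classical
  -- the independent family of pairwise products over rows
  set h : Fin R → Fin R → (Σ n : Fin N, Fin (I n)) → Ω → ℝ :=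
    fun r s p ω => A p.1 ω p.2 r * A p.1 ω p.2 s with hh
  have hmeas' : ∀ r s p, Measurable (h r s p) := by
    intro r s p
    exact ((hmeas p.1 p.2).eval (a := r)).mul ((hmeas p.1 p.2).eval (a := s))
  have hindep' : ∀ r s : Fin R, iIndepFun (h r s) P := by
    intro r s
    exact hindep.comp (fun p (v : Fin R → ℝ) => v r * v s)
      (fun p => ((measurable_pi_apply r).mul (measurable_pi_apply s)))
  have hint' : ∀ r s p, Integrable (h r s p) P := by
    intro r s p
    have := (hL2 p.1 p.2 r).smul (hL2 p.1 p.2 s)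
      (p := 2) (q := 2) (r := 1)
    rw [memLp_one_iff_integrable] at this
    exact this.congr (Filter.Eventually.of_forall (fun ω => by
      simp [hh, smul_eq_mul, mul_comm]))
  -- the embedding of Fin N into the sigma type for a fixed multi-index i
  have key : ∀ (i : (n : Fin N) → Fin (I n)) (r s : Fin R),
      Integrable (fun ω => ∏ n, h r s ⟨n, i n⟩ ω) P ∧
        (∫ ω, ∏ n, h r s ⟨n, i n⟩ ω ∂P) = ∏ n, ∫ ω, h r s ⟨n, i n⟩ ω ∂P := by
    intro i r s
    set φ : Fin N → (Σ n : Fin N, Fin (I n)) := fun n => ⟨n, i n⟩ with hφ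
    have hφinj : Function.Injective φ := fun a b hab => congrArg Sigma.fst hab
    have h1 := iIndep_integral_prod (hindep' r s) (hmeas' r s) (hint' r s)
      (Finset.univ.image φ)
    have e1 : ∀ ω, (∏ p ∈ Finset.univ.image φ, h r s p ω) = ∏ n, h r s ⟨n, i n⟩ ω := by
      intro ω
      rw [Finset.prod_image (fun a _ b _ hab => hφinj hab)]
    have e2 : (∏ p ∈ Finset.univ.image φ, ∫ ω, h r s p ω ∂P)
        = ∏ n, ∫ ω, h r s ⟨n, i n⟩ ω ∂P := by
      rw [Finset.prod_image (fun a _ b _ hab => hφinj hab)]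
    constructor
    · exact h1.1.congr (Filter.Eventually.of_forall (fun ω => e1 ω))
    · rw [← e2, ← h1.2]
      exact integral_congr_ae (Filter.Eventually.of_forall (fun ω => (e1 ω).symm))
  -- pointwise expansion of the squared kruskal entry
  have hexp : ∀ (i : (n : Fin N) → Fin (I n)) (ω : Ω),
      (kruskal (fun n => A n ω) i) ^ 2 = ∑ r : Fin R, ∑ s : Fin R, ∏ n, h r s ⟨n, i n⟩ ω := by
    intro i ω
    simp only [kruskal, outerProd, Finset.sum_apply]
    rw [sq, Finset.sum_mul_sum]
    refine Finset.sum_congr rfl (fun r _ => Finset.sum_congr rfl (fun s _ => ?_))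
    rw [← Finset.prod_mul_distrib]
  -- integrability of each squared entry
  have hsqint : ∀ i : (n : Fin N) → Fin (I n),
      Integrable (fun ω => (kruskal (fun n => A n ω) i) ^ 2) P := by
    intro i
    have : Integrable (fun ω => ∑ r : Fin R, ∑ s : Fin R, ∏ n, h r s ⟨n, i n⟩ ω) P :=
      integrable_finset_sum _ (fun r _ => integrable_finset_sum _ (fun s _ => (key i r s).1))
    exact this.congr (Filter.Eventually.of_forall (fun ω => (hexp i ω).symm))
  have htermint : ∀ i : (n : Fin N) → Fin (I n),
      Integrable (fun ω => (O i * kruskal (fun n => A n ω) i) ^ 2) P := by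
    intro i
    have : (fun ω => (O i * kruskal (fun n => A n ω) i) ^ 2)
        = fun ω => O i ^ 2 * (kruskal (fun n => A n ω) i) ^ 2 := by
      funext ω; ring
    rw [this]
    exact (hsqint i).const_mul _
  rw [integral_finset_sum _ (fun i _ => htermint i)]
  refine Finset.sum_congr rfl (fun i _ => ?_)
  rcases hO i with h0 | h1
  · simp [h0]
  · simp only [h1, one_mul]
    calc (∫ ω, (kruskal (fun n => A n ω) i) ^ 2 ∂P)
        = ∫ ω, ∑ r : Fin R, ∑ s : Fin R, ∏ n, h r s ⟨n, i n⟩ ω ∂P :=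
          integral_congr_ae (Filter.Eventually.of_forall (fun ω => hexp i ω))
      _ = ∑ r : Fin R, ∑ s : Fin R, ∫ ω, ∏ n, h r s ⟨n, i n⟩ ω ∂P := by
          rw [integral_finset_sum _ (fun r _ =>
            integrable_finset_sum _ (fun s _ => (key i r s).1))]
          exact Finset.sum_congr rfl (fun r _ =>
            integral_finset_sum _ (fun s _ => (key i r s).1))
      _ = ∑ r : Fin R, ∑ s : Fin R, ∏ n, ∫ ω, A n ω (i n) r * A n ω (i n) s ∂P := by
          refine Finset.sum_congr rfl (fun r _ => Finset.sum_congr rfl (fun s _ => ?_))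
          exact (key i r s).2
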